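/- In the nil affine Hecke algebra H_n, for each 1 ≤ i ≤ n−1: τ_i · Δ_n = Δ_n · τ_i, where Δ_n is the image of Σ_{r=1}^n τ_r⋯τ_{n−1} ⊗ τ_1⋯τ_{r−1} in H_n ι_0 ⊗_{H_{n−1}[y]} ι_1 H_n, the left action being left multiplication on the first factor and the right action right multiplication on the second factor. -/

import Mathlib

open scoped TensorProduct

namespace NilHecke

variable (k : Type) [Field k]

/-- Relations of the nil affine Hecke algebra `H n` (0-based indices: generators
`x_0,…,x_{n-1}` and `τ_0,…,τ_{n-2}`; out-of-range generators are killed). -/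
inductive Rel (n : ℕ) : FreeAlgebra k (ℕ ⊕ ℕ) → FreeAlgebra k (ℕ ⊕ ℕ) → Prop
  | xkill (i : ℕ) (h : n ≤ i) : Rel n (FreeAlgebra.ι k (.inl i)) 0
  | tkill (i : ℕ) (h : n ≤ i + 1) : Rel n (FreeAlgebra.ι k (.inr i)) 0
  | tsq (i : ℕ) : Rel n (FreeAlgebra.ι k (.inr i) * FreeAlgebra.ι k (.inr i)) 0
  | braid (i : ℕ) :
      Rel n (FreeAlgebra.ι k (.inr i) * FreeAlgebra.ι k (.inr (i+1)) * FreeAlgebra.ι k (.inr i))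
        (FreeAlgebra.ι k (.inr (i+1)) * FreeAlgebra.ι k (.inr i) * FreeAlgebra.ι k (.inr (i+1)))
  | tcomm (i j : ℕ) (h : i + 1 < j) :
      Rel n (FreeAlgebra.ι k (.inr i) * FreeAlgebra.ι k (.inr j))
        (FreeAlgebra.ι k (.inr j) * FreeAlgebra.ι k (.inr i))
  | xcomm (i j : ℕ) :
      Rel n (FreeAlgebra.ι k (.inl i) * FreeAlgebra.ι k (.inl j))
        (FreeAlgebra.ι k (.inl j) * FreeAlgebra.ι k (.inl i))
  | txcomm (i j : ℕ) (h1 : j ≠ i) (h2 : j ≠ i + 1) :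
      Rel n (FreeAlgebra.ι k (.inr i) * FreeAlgebra.ι k (.inl j))
        (FreeAlgebra.ι k (.inl j) * FreeAlgebra.ι k (.inr i))
  | tx (i : ℕ) (h : i + 1 < n) :
      Rel n (FreeAlgebra.ι k (.inr i) * FreeAlgebra.ι k (.inl i)
          - FreeAlgebra.ι k (.inl (i+1)) * FreeAlgebra.ι k (.inr i)) 1
  | xt (i : ℕ) (h : i + 1 < n) :
      Rel n (FreeAlgebra.ι k (.inl i) * FreeAlgebra.ι k (.inr i)
          - FreeAlgebra.ι k (.inr i) * FreeAlgebra.ι k (.inl (i+1))) 1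

/-- The nil affine Hecke algebra on `n` strands over `k`. -/
def H (n : ℕ) : Type := RingQuot (Rel k n)

instance (n : ℕ) : Ring (H k n) := inferInstanceAs (Ring (RingQuot (Rel k n)))

instance (n : ℕ) : Algebra k (H k n) := inferInstanceAs (Algebra k (RingQuot (Rel k n)))

/-- The polynomial generator `x_{i+1}` (0-based `x_i`). -/
def X (n i : ℕ) : H k n := RingQuot.mkAlgHom k (Rel k n) (FreeAlgebra.ι k (.inl i))

/-- The nil Hecke generator `τ_{i+1}` (0-based `τ_i`). -/
def T (n i : ℕ) : H k n := RingQuot.mkAlgHom k (Rel k n) (FreeAlgebra.ι k (.inr i))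

/-- The element `s_i = τ_i (x_i - x_{i+1}) - 1`. -/
def s (n i : ℕ) : H k n := T k n i * (X k n i - X k n (i+1)) - 1

/-- The ascending product `τ_a τ_{a+1} ⋯ τ_{b-1}` (0-based). -/
def chain (n a b : ℕ) : H k n := (List.map (T k n) (List.range' a (b - a))).prod

theorem X_kill (n i : ℕ) (h : n ≤ i) : X k n i = 0 := by
  have hr := RingQuot.mkAlgHom_rel k (Rel.xkill (k := k) (n := n) i h)
  simp only [X, map_zero] at hr
  exact hr

theorem T_kill (n i : ℕ) (h : n ≤ i + 1) : T k n i = 0 := by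
  have hr := RingQuot.mkAlgHom_rel k (Rel.tkill (k := k) (n := n) i h)
  simp only [T, map_zero] at hr
  exact hr

theorem T_sq (n i : ℕ) : T k n i * T k n i = 0 := by
  have hr := RingQuot.mkAlgHom_rel k (Rel.tsq (k := k) (n := n) i)
  simp only [T, map_mul, map_zero] at hr
  exact hr

theorem T_braid (n i : ℕ) :
    T k n i * T k n (i+1) * T k n i = T k n (i+1) * T k n i * T k n (i+1) := by
  have hr := RingQuot.mkAlgHom_rel k (Rel.braid (k := k) (n := n) i)
  simp only [T, map_mul] at hr
  exact hr

theorem T_comm (n i j : ℕ) (h : i + 1 < j) : T k n i * T k n j = T k n j * T k n i := by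
  have hr := RingQuot.mkAlgHom_rel k (Rel.tcomm (k := k) (n := n) i j h)
  simp only [T, map_mul] at hr
  exact hr

theorem X_comm (n i j : ℕ) : X k n i * X k n j = X k n j * X k n i := by
  have hr := RingQuot.mkAlgHom_rel k (Rel.xcomm (k := k) (n := n) i j)
  simp only [X, map_mul] at hr
  exact hr

theorem TX_comm (n i j : ℕ) (h1 : j ≠ i) (h2 : j ≠ i + 1) :
    T k n i * X k n j = X k n j * T k n i := by
  have hr := RingQuot.mkAlgHom_rel k (Rel.txcomm (k := k) (n := n) i j h1 h2)
  simp only [T, X, map_mul] at hr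
  exact hr

theorem TX (n i : ℕ) (h : i + 1 < n) :
    T k n i * X k n i - X k n (i+1) * T k n i = 1 := by
  have hr := RingQuot.mkAlgHom_rel k (Rel.tx (k := k) (n := n) i h)
  simp only [T, X, map_mul, map_sub, map_one] at hr
  exact hr

theorem XT (n i : ℕ) (h : i + 1 < n) :
    X k n i * T k n i - T k n i * X k n (i+1) = 1 := by
  have hr := RingQuot.mkAlgHom_rel k (Rel.xt (k := k) (n := n) i h)
  simp only [T, X, map_mul, map_sub, map_one] at hr
  exact hr

/-- The inclusion `H m → H n` for `m ≤ n`. -/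
def incl (m n : ℕ) (h : m ≤ n) : H k m →ₐ[k] H k n :=
  RingQuot.liftAlgHom k ⟨FreeAlgebra.lift k (fun g =>
    match g with
    | .inl i => if i < m then X k n i else 0
    | .inr i => if i + 1 < m then T k n i else 0), by
      rintro a b r
      induction r with
      | xkill i h' => simp only [FreeAlgebra.lift_ι_apply, map_zero]; rw [if_neg (by omega)]
      | tkill i h' => simp only [FreeAlgebra.lift_ι_apply, map_zero]; rw [if_neg (by omega)]
      | tsq i =>
          simp only [map_mul, FreeAlgebra.lift_ι_apply, map_zero]
          split_ifs <;> simp [T_sq]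
      | braid i =>
          simp only [map_mul, FreeAlgebra.lift_ι_apply]
          split_ifs <;> simp [T_braid]
      | tcomm i j h' =>
          simp only [map_mul, FreeAlgebra.lift_ι_apply]
          split_ifs <;> simp [T_comm k n i j h']
      | xcomm i j =>
          simp only [map_mul, FreeAlgebra.lift_ι_apply]
          split_ifs <;> simp [X_comm k n i j]
      | txcomm i j h1 h2 =>
          simp only [map_mul, FreeAlgebra.lift_ι_apply]
          split_ifs <;> simp [TX_comm k n i j h1 h2]
      | tx i h' =>
          simp only [map_sub, map_mul, map_one, FreeAlgebra.lift_ι_apply]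
          rw [if_pos h', if_pos (by omega : i < m), if_pos (by omega : i + 1 < m)]
          exact TX k n i (by omega)
      | xt i h' =>
          simp only [map_sub, map_mul, map_one, FreeAlgebra.lift_ι_apply]
          rw [if_pos (by omega : i < m), if_pos h', if_pos h']
          exact XT k n i (by omega)⟩

/-- The shift embedding `H m → H n` (sending `x_i ↦ x_{i+1}`, `τ_i ↦ τ_{i+1}`). -/
def shj (m n : ℕ) (h : m + 1 ≤ n ∨ m = 0) : H k m →ₐ[k] H k n :=
  RingQuot.liftAlgHom k ⟨FreeAlgebra.lift k (fun g =>
    match g with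
    | .inl i => if i < m then X k n (i+1) else 0
    | .inr i => if i + 1 < m then T k n (i+1) else 0), by
      rintro a b r
      induction r with
      | xkill i h' => simp only [FreeAlgebra.lift_ι_apply, map_zero]; rw [if_neg (by omega)]
      | tkill i h' => simp only [FreeAlgebra.lift_ι_apply, map_zero]; rw [if_neg (by omega)]
      | tsq i =>
          simp only [map_mul, FreeAlgebra.lift_ι_apply, map_zero]
          split_ifs <;> simp [T_sq]
      | braid i =>
          simp only [map_mul, FreeAlgebra.lift_ι_apply]
          split_ifs <;> simp [T_braid]
      | tcomm i j h' =>
          simp only [map_mul, FreeAlgebra.lift_ι_apply]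
          split_ifs <;> simp [T_comm k n (i+1) (j+1) (by omega)]
      | xcomm i j =>
          simp only [map_mul, FreeAlgebra.lift_ι_apply]
          split_ifs <;> simp [X_comm k n (i+1) (j+1)]
      | txcomm i j h1 h2 =>
          simp only [map_mul, FreeAlgebra.lift_ι_apply]
          split_ifs <;> simp [TX_comm k n (i+1) (j+1) (by omega) (by omega)]
      | tx i h' =>
          simp only [map_sub, map_mul, map_one, FreeAlgebra.lift_ι_apply]
          rw [if_pos h', if_pos (by omega : i < m), if_pos (by omega : i + 1 < m)]
          exact TX k n (i+1) (by omega)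
      | xt i h' =>
          simp only [map_sub, map_mul, map_one, FreeAlgebra.lift_ι_apply]
          rw [if_pos (by omega : i < m), if_pos h', if_pos h']
          exact XT k n (i+1) (by omega)⟩

end NilHecke

namespace NilHecke

variable (k : Type) [Field k]

/-- `ι_0 : H_{n−1}[y] → H_n`, sending `x_i ↦ x_i`, `τ_i ↦ τ_i`, `y ↦ x_n`
(0-based: `y ↦ x_{n-1}`, the last variable). -/
def iota0 (n : ℕ) (p : Polynomial (H k (n-1))) : H k n :=
  p.sum fun i a => incl k (n-1) n (Nat.sub_le n 1) a * X k n (n-1) ^ i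

/-- `ι_1 : H_{n−1}[y] → H_n`, sending `x_i ↦ x_{i+1}`, `τ_i ↦ τ_{i+1}`, `y ↦ x_1`
(0-based: `y ↦ x_0`, the first variable). -/
def iota1 (n : ℕ) (p : Polynomial (H k (n-1))) : H k n :=
  p.sum fun i a => shj k (n-1) n (by omega) a * X k n 0 ^ i

/-- The balancing submodule of `H_n ⊗_k H_n` whose quotient is the balanced tensor
product `H_n ι_0 ⊗_{H_{n−1}[y]} ι_1 H_n`. -/
noncomputable def bal (n : ℕ) : Submodule k (H k n ⊗[k] H k n) :=
  Submodule.span k {z | ∃ (a b : H k n) (p : Polynomial (H k (n-1))),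
    z = (a * iota0 k n p) ⊗ₜ[k] b - a ⊗ₜ[k] (iota1 k n p * b)}

/-- A representative in `H_n ⊗_k H_n` of the element
`Δ_n = Σ_{r=1}^{n} (τ_r ⋯ τ_{n−1}) ⊗ (τ_1 ⋯ τ_{r−1})` (1-based indices). -/
noncomputable def deltaT (n : ℕ) : H k n ⊗[k] H k n :=
  ∑ r ∈ Finset.range n, chain k n r (n-1) ⊗ₜ[k] chain k n 0 r

/-- A representative of `p · Δ_n` for `p ∈ H_n[y]` acting through the left
`H_n[y]`-module structure of `H_n ι_0 ⊗_{H_{n−1}[y]} ι_1 H_n` (on the left factor,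
`y` acting via `x_n`, i.e. a coefficient `c·y^i` sends `m ⊗ h` to `c·m·x_n^i ⊗ h`). -/
noncomputable def actDelta (n : ℕ) (p : Polynomial (H k n)) : H k n ⊗[k] H k n :=
  ∑ r ∈ Finset.range n,
    (p.sum fun i c => c * chain k n r (n-1) * X k n (n-1) ^ i) ⊗ₜ[k] chain k n 0 r

end NilHecke

namespace NilHecke

section Aux
variable (k : Type) [Field k]

theorem chain_nil (n a b : ℕ) (h : b ≤ a) : chain k n a b = 1 := by
  unfold chain
  rw [Nat.sub_eq_zero_of_le h]
  simp

theorem chain_cons (n a b : ℕ) (h : a < b) :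
    chain k n a b = T k n a * chain k n (a+1) b := by
  unfold chain
  have h1 : b - a = (b - (a+1)) + 1 := by omega
  rw [h1, List.range'_succ]
  simp

theorem chain_concat (n a b : ℕ) (h : a ≤ b) :
    chain k n a (b+1) = chain k n a b * T k n b := by
  unfold chain
  have h1 : b + 1 - a = (b - a) + 1 := by omega
  have h2 : a + (b - a) = b := by omega
  rw [h1, List.range'_1_concat, List.map_append, List.prod_append, h2]
  simp

theorem T_comm_prod (n i : ℕ) (l : List ℕ) (h : ∀ j ∈ l, i + 1 < j) :
    T k n i * (l.map (T k n)).prod = (l.map (T k n)).prod * T k n i := by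
  induction l with
  | nil => simp
  | cons a l ih =>
    simp only [List.map_cons, List.prod_cons]
    rw [← mul_assoc, T_comm k n i a (h a (by simp)),
      mul_assoc, ih (fun j hj => h j (by simp [hj])), ← mul_assoc]

theorem prod_T_comm (n i : ℕ) (l : List ℕ) (h : ∀ j ∈ l, j + 1 < i) :
    (l.map (T k n)).prod * T k n i = T k n i * (l.map (T k n)).prod := by
  induction l with
  | nil => simp
  | cons a l ih =>
    simp only [List.map_cons, List.prod_cons]
    rw [mul_assoc, ih (fun j hj => h j (by simp [hj])), ← mul_assoc,
      T_comm k n a i (h a (by simp)), mul_assoc]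

theorem T_comm_chain (n i a b : ℕ) (h : i + 1 < a) :
    T k n i * chain k n a b = chain k n a b * T k n i := by
  apply T_comm_prod
  intro j hj; rw [List.mem_range'_1] at hj; omega

theorem chain_T_comm (n i a b : ℕ) (h : b ≤ i) :
    chain k n a b * T k n (i+1) = T k n (i+1) * chain k n a b := by
  apply prod_T_comm
  intro j hj; rw [List.mem_range'_1] at hj; omega

theorem slide (n b j : ℕ) (hb : j + 1 < b) :
    ∀ a, a ≤ j → T k n (j+1) * chain k n a b = chain k n a b * T k n j := by
  suffices H : ∀ d a, a ≤ j → j - a = d →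
      T k n (j+1) * chain k n a b = chain k n a b * T k n j by
    intro a ha; exact H (j - a) a ha rfl
  intro d
  induction d with
  | zero =>
    intro a ha hd
    have haj : a = j := by omega
    subst haj
    rw [chain_cons k n a b (by omega), chain_cons k n (a+1) b (by omega)]
    have hc : T k n a * chain k n (a+1+1) b = chain k n (a+1+1) b * T k n a :=
      T_comm_chain k n a (a+1+1) b (by omega)
    simp only [← mul_assoc]
    rw [← T_braid k n a, mul_assoc (T k n a * T k n (a+1)), hc, ← mul_assoc]
  | succ d ih =>
    intro a ha hd
    rw [chain_cons k n a b (by omega), ← mul_assoc (T k n (j+1)),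
      ← T_comm k n a (j+1) (by omega), mul_assoc,
      ih (a+1) (by omega) (by omega), ← mul_assoc]

theorem incl_T (m n j : ℕ) (hmn : m ≤ n) (h : j + 1 < m) :
    incl k m n hmn (T k m j) = T k n j := by
  rw [T, incl]
  erw [RingQuot.liftAlgHom_mkAlgHom_apply, FreeAlgebra.lift_ι_apply]
  simp [h]

theorem shj_T (m n j : ℕ) (hmn : m + 1 ≤ n ∨ m = 0) (h : j + 1 < m) :
    shj k m n hmn (T k m j) = T k n (j+1) := by
  rw [T, shj]
  erw [RingQuot.liftAlgHom_mkAlgHom_apply, FreeAlgebra.lift_ι_apply]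
  simp [h]

theorem iota0_C (n : ℕ) (c : H k (n-1)) :
    iota0 k n (Polynomial.C c) = incl k (n-1) n (Nat.sub_le n 1) c := by
  unfold iota0
  rw [Polynomial.sum_C_index (by simp)]
  simp

theorem iota1_C (n : ℕ) (c : H k (n-1)) :
    iota1 k n (Polynomial.C c) = shj k (n-1) n (by omega) c := by
  unfold iota1
  rw [Polynomial.sum_C_index (by simp)]
  simp

theorem bal_T (n j : ℕ) (hj : j + 2 < n) (a b : H k n) :
    (a * T k n j) ⊗ₜ[k] b - a ⊗ₜ[k] (T k n (j+1) * b) ∈ bal k n := by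
  apply Submodule.subset_span
  refine ⟨a, b, Polynomial.C (T k (n-1) j), ?_⟩
  rw [iota0_C, iota1_C, incl_T k (n-1) n j (Nat.sub_le n 1) (by omega),
    shj_T k (n-1) n j (by omega) (by omega)]

end Aux

end NilHecke

namespace NilHecke

/-- `τ_i · Δ_n = Δ_n · τ_i` in
`H_n ι_0 ⊗_{H_{n−1}[y]} ι_1 H_n` (realized as the quotient of `H_n ⊗_k H_n` by the
balancing submodule `bal`), for each `1 ≤ i ≤ n − 1` (0-based: `i + 1 < n`). -/
theorem tau_delta_comm (k : Type) [Field k] (n i : ℕ) (hi : i + 1 < n) :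
    (∑ r ∈ Finset.range n, (T k n i * chain k n r (n-1)) ⊗ₜ[k] chain k n 0 r)
      - (∑ r ∈ Finset.range n, chain k n r (n-1) ⊗ₜ[k] (chain k n 0 r * T k n i))
      ∈ bal k n := by
  have hn2 : 2 ≤ n := by omega
  rw [← Finset.sum_sub_distrib]
  set X0 : H k n ⊗[k] H k n := chain k n i (n-1) ⊗ₜ[k] chain k n 0 (i+1) with hX0
  set D : ℕ → H k n ⊗[k] H k n := fun r =>
    (T k n i * chain k n r (n-1)) ⊗ₜ[k] chain k n 0 r
      - chain k n r (n-1) ⊗ₜ[k] (chain k n 0 r * T k n i) with hD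
  set c : ℕ → H k n ⊗[k] H k n := fun r =>
    (if r = i then X0 else 0) - (if r = i+1 then X0 else 0) with hc
  have hcsum : ∑ r ∈ Finset.range n, c r = 0 := by
    rw [hc]
    simp only [Finset.sum_sub_distrib, Finset.sum_ite_eq']
    rw [if_pos (Finset.mem_range.2 (by omega)), if_pos (Finset.mem_range.2 (by omega)),
      sub_self]
  have key : ∀ r ∈ Finset.range n, D r + c r ∈ bal k n := by
    intro r hr
    rw [Finset.mem_range] at hr
    rcases Nat.lt_trichotomy r i with h1 | h1 | h1
    · -- r < i
      have hci : c r = 0 := by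
        rw [hc]; simp only [if_neg (by omega : ¬ r = i), if_neg (by omega : ¬ r = i+1), sub_zero]
      rw [hci, add_zero, hD]
      obtain ⟨i', rfl⟩ : ∃ i', i = i' + 1 := ⟨i - 1, by omega⟩
      simp only
      rw [slide k n (n-1) i' (by omega) r (by omega),
        chain_T_comm k n i' 0 r (by omega)]
      exact bal_T k n i' (by omega) _ _
    · -- r = i
      subst h1
      have hci : c r = X0 := by
        simp [hc, (by omega : r ≠ r + 1)]
      have h2 : T k n r * chain k n r (n-1) = 0 := by
        rw [chain_cons k n r (n-1) (by omega), ← mul_assoc, T_sq, zero_mul]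
      have h3 : chain k n 0 r * T k n r = chain k n 0 (r+1) :=
        (chain_concat k n 0 r (by omega)).symm
      rw [hci, hD]
      simp only
      rw [h2, h3, hX0]
      simp only [TensorProduct.zero_tmul, zero_sub, neg_add_cancel]
      exact Submodule.zero_mem _
    · -- i < r
      rcases eq_or_lt_of_le (Nat.succ_le_of_lt h1) with h2 | h2
      · -- r = i + 1
        have hr1 : r = i + 1 := h2.symm
        subst hr1
        have hci : c (i+1) = -X0 := by
          simp [hc, (by omega : i + 1 ≠ i)]
        have h3 : T k n i * chain k n (i+1) (n-1) = chain k n i (n-1) :=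
          (chain_cons k n i (n-1) (by omega)).symm
        have h4 : chain k n 0 (i+1) * T k n i = 0 := by
          rw [chain_concat k n 0 i (by omega), mul_assoc, T_sq, mul_zero]
        rw [hci, hD]
        simp only
        rw [h3, h4, hX0]
        simp only [TensorProduct.tmul_zero, sub_zero, add_neg_cancel]
        exact Submodule.zero_mem _
      · -- i + 1 < r
        have hci : c r = 0 := by
          rw [hc]; simp only [if_neg (by omega : ¬ r = i), if_neg (by omega : ¬ r = i+1), sub_zero]
        rw [hci, add_zero, hD]
        simp only
        rw [T_comm_chain k n i r (n-1) (by omega),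
          ← slide k n r i (by omega) 0 (by omega)]
        exact bal_T k n i (by omega) _ _
  have hsum : ∑ r ∈ Finset.range n, (D r + c r) ∈ bal k n :=
    Submodule.sum_mem _ key
  rwa [Finset.sum_add_distrib, hcsum, add_zero] at hsum


end NilHecke
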